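/- For all reals α > 0, β > 0 and every positive integer M, the double integral ∫₀^∞ ∫₀^∞ log₂(1 + α·z/(1 + β·y)) · (z^(M−1) e^(−z)/(M−1)!) · e^(−y) dz dy equals log₂(e) · Σ_{i=0}^{M−1} Σ_{l=0}^{i} α^(l+1−i) / (β · (i−l)!) · I₁(1/α, α/β, i, l+1). (This is the closed form R⁽²⁾(α, β, M) = E[log₂(1+X)] for X = α·Z/(1 + Y) with Z having the Gamma(M,1) density and Y = β·Y₀ with Y₀ unit-mean exponential, independent of Z.) -/

import Mathlib

set_option maxHeartbeats 1000000

open Real MeasureTheory Finset Set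


lemma integral_pow_exp {n : ℕ} {a : ℝ} (ha : 0 < a) :
    ∫ x in Set.Ioi (0:ℝ), x ^ n * Real.exp (-a * x) = n.factorial / a ^ (n+1) := by
  have h := integral_rpow_mul_exp_neg_mul_Ioi (a := (n:ℝ)+1) (r := a)
    (by positivity) ha
  rw [show ((n:ℝ)+1-1) = (n:ℝ) by ring,
    show ((n:ℝ)+1) = ((n+1:ℕ):ℝ) by push_cast; ring, Real.rpow_natCast] at h
  push_cast at h
  rw [Real.Gamma_nat_eq_factorial] at h
  push_cast at h
  rw [show ∫ x in Set.Ioi (0:ℝ), x ^ n * Real.exp (-a * x)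
      = ∫ t in Set.Ioi (0:ℝ), t ^ ((n:ℝ)) * Real.exp (-(a * t)) from
    setIntegral_congr_fun measurableSet_Ioi (fun x hx => by
      rw [Real.rpow_natCast, neg_mul]), h]
  field_simp
  rw [← mul_pow, one_div, inv_mul_cancel₀ ha.ne', one_pow]

lemma integrableOn_pow_exp {n : ℕ} {a : ℝ} (ha : 0 < a) :
    IntegrableOn (fun x : ℝ => x ^ n * Real.exp (-a * x)) (Set.Ioi 0) := by
  have := integrableOn_rpow_mul_exp_neg_mul_rpow (p := 1) (s := n) (b := a)
    (by linarith [Nat.cast_nonneg (α := ℝ) n]) one_pos ha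
  refine this.congr_fun (fun x hx => ?_) measurableSet_Ioi
  dsimp only
  rw [Real.rpow_natCast, Real.rpow_one]

lemma log_eq_integral {X : ℝ} (hX : 0 ≤ X) :
    Real.log (1+X) = ∫ t in Set.Ioi (0:ℝ), if t < X then (1+t)⁻¹ else 0 := by
  have h1 : (∫ t in Set.Ioi (0:ℝ), if t < X then (1+t)⁻¹ else 0)
      = ∫ t in Set.Ioo (0:ℝ) X, (1+t)⁻¹ := by
    have : (fun t : ℝ => if t < X then (1+t)⁻¹ else 0)
        = (Set.Iio X).indicator (fun t => (1+t)⁻¹) := by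
      funext t; simp [Set.indicator_apply]
    rw [this, MeasureTheory.setIntegral_indicator measurableSet_Iio, Set.Ioi_inter_Iio]
  have h2 : (∫ t in Set.Ioo (0:ℝ) X, (1+t)⁻¹) = ∫ t in (0:ℝ)..X, (1+t)⁻¹ := by
    rw [intervalIntegral.integral_of_le hX, integral_Ioc_eq_integral_Ioo]
  have h3 : (∫ t in (0:ℝ)..X, (1+t)⁻¹) = ∫ u in (1:ℝ)..(1+X), u⁻¹ := by
    simpa using intervalIntegral.integral_comp_add_left (a := (0:ℝ)) (b := X)
      (fun u => u⁻¹) 1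
  rw [h1, h2, h3, integral_inv (by
    intro h
    rcases Set.mem_uIcc.1 h with ⟨h1', _⟩ | ⟨_, h2'⟩ <;> linarith)]
  rw [div_one]

lemma gamma_tail {n : ℕ} {s : ℝ} (hs : 0 ≤ s) :
    ∫ z in Set.Ioi s, z ^ n * Real.exp (-z)
      = Real.exp (-s) * ∑ i ∈ Finset.range (n+1),
          ((n.factorial : ℝ) / i.factorial) * s ^ i := by
  set F : ℝ → ℝ := fun x => -(Real.exp (-x) * ∑ i ∈ Finset.range (n+1),
      ((n.factorial : ℝ) / i.factorial) * x ^ i) with hF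
  have hderiv : ∀ x ∈ Set.Ici s, HasDerivAt F (x ^ n * Real.exp (-x)) x := by
    intro x _
    have hP : HasDerivAt (fun x : ℝ => ∑ i ∈ Finset.range (n+1),
        ((n.factorial : ℝ) / i.factorial) * x ^ i)
        (∑ i ∈ Finset.range (n+1),
          ((n.factorial : ℝ) / i.factorial) * (i * x ^ (i-1))) x := by
      apply HasDerivAt.fun_sum
      intro i _
      exact (hasDerivAt_pow i x).const_mul _
    have hE : HasDerivAt (fun x : ℝ => Real.exp (-x)) (-Real.exp (-x)) x := by
      have h := (Real.hasDerivAt_exp (-x)).comp x (hasDerivAt_neg x)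
      rw [mul_neg_one] at h; exact h
    have := ((hE.mul hP).neg)
    refine this.congr_deriv ?_
    have key : (∑ i ∈ Finset.range (n+1), ((n.factorial : ℝ) / i.factorial) * x ^ i)
        - (∑ i ∈ Finset.range (n+1), ((n.factorial : ℝ) / i.factorial) * (i * x ^ (i-1)))
        = x ^ n := by
      have h2 : (∑ i ∈ Finset.range (n+1), ((n.factorial : ℝ) / i.factorial) * (i * x ^ (i-1)))
          = ∑ j ∈ Finset.range n, ((n.factorial : ℝ) / j.factorial) * x ^ j := by
        rw [Finset.sum_range_succ' (fun i => ((n.factorial : ℝ) / i.factorial) * (i * x ^ (i-1)))]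
        simp only [Nat.cast_zero, Nat.factorial_zero]
        rw [show ((0:ℝ) * x ^ (0-1)) = 0 by simp]
        simp only [mul_zero, add_zero]
        apply Finset.sum_congr rfl
        intro j _
        have : ((j+1).factorial : ℝ) = (j+1) * j.factorial := by
          rw [Nat.factorial_succ]; push_cast; ring
        rw [this]
        have hj1 : ((j:ℝ)+1) ≠ 0 := by positivity
        field_simp
        rw [show j + 1 - 1 = j by omega]; push_cast; ring
      rw [h2, Finset.sum_range_succ]
      have : ((n.factorial : ℝ) / n.factorial) = 1 := by
        rw [div_self]; exact_mod_cast Nat.factorial_ne_zero n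
      rw [this]; ring
    rw [← key]; ring
  have hint : IntegrableOn (fun x : ℝ => x ^ n * Real.exp (-x)) (Set.Ioi s) := by
    have := (integrableOn_pow_exp (n := n) (a := 1) one_pos).mono_set
      (Set.Ioi_subset_Ioi hs)
    refine this.congr_fun (fun x _ => by norm_num) measurableSet_Ioi
  have htend : Filter.Tendsto F Filter.atTop (nhds 0) := by
    rw [show (0:ℝ) = -(∑ i ∈ Finset.range (n+1), ((n.factorial : ℝ) / i.factorial) * 0) by simp]
    apply Filter.Tendsto.neg
    have : ∀ x : ℝ, Real.exp (-x) * ∑ i ∈ Finset.range (n+1),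
        ((n.factorial : ℝ) / i.factorial) * x ^ i
        = ∑ i ∈ Finset.range (n+1), ((n.factorial : ℝ) / i.factorial) * (x ^ i * Real.exp (-x)) := by
      intro x; rw [Finset.mul_sum]; apply Finset.sum_congr rfl; intro i _; ring
    simp only [this]
    apply tendsto_finset_sum
    intro i _
    simpa using (tendsto_pow_mul_exp_neg_atTop_nhds_zero i).const_mul
      ((n.factorial : ℝ) / i.factorial)
  have := MeasureTheory.integral_Ioi_of_hasDerivAt_of_tendsto'
    (f := F) (f' := fun x => x ^ n * Real.exp (-x)) hderiv hint htend
  rw [this, hF]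
  simp only [zero_sub, neg_neg]


lemma indicator_integrable {X : ℝ} :
    Integrable (fun t : ℝ => if t < X then (1+t)⁻¹ else 0)
      (volume.restrict (Set.Ioi 0)) := by
  have : (fun t : ℝ => if t < X then (1+t)⁻¹ else 0)
      = (Set.Iio X).indicator (fun t => (1+t)⁻¹) := by
    funext t; simp [Set.indicator_apply]
  rw [this, integrable_indicator_iff measurableSet_Iio]
  rw [IntegrableOn, Measure.restrict_restrict measurableSet_Iio, Set.Iio_inter_Ioi]
  have hcont : ContinuousOn (fun t : ℝ => (1+t)⁻¹) (Set.Icc 0 X) := by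
    apply ContinuousOn.inv₀ (by fun_prop)
    intro t ht
    have := ht.1; positivity
  exact (hcont.integrableOn_Icc).mono_set Set.Ioo_subset_Icc_self

noncomputable def F1 (c : ℝ) (m : ℕ) (z t : ℝ) : ℝ :=
  (if t < c*z then (1+t)⁻¹ else 0) * (z^m * Real.exp (-z))

lemma S1 {m : ℕ} {c : ℝ} (hc : 0 < c) :
    ∫ z in Set.Ioi (0:ℝ), Real.log (1 + c*z) * (z^m * Real.exp (-z))
      = ∫ t in Set.Ioi (0:ℝ), (1+t)⁻¹ * (Real.exp (-(t/c)) *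
          ∑ i ∈ Finset.range (m+1), ((m.factorial : ℝ)/i.factorial) * (t/c)^i) := by
  have f_def : ∀ z t : ℝ, F1 c m z t = (if t < c*z then (1+t)⁻¹ else 0) * (z^m * Real.exp (-z)) :=
    fun z t => rfl
  set f : ℝ → ℝ → ℝ := F1 c m with hf
  have hmeas : AEStronglyMeasurable (Function.uncurry f)
      ((volume.restrict (Set.Ioi 0)).prod (volume.restrict (Set.Ioi 0))) := by
    apply Measurable.aestronglyMeasurable
    have : Function.uncurry f = fun p : ℝ × ℝ =>
        (if p.2 < c * p.1 then (1+p.2)⁻¹ else 0) * (p.1^m * Real.exp (-p.1)) := rfl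
    rw [this]
    apply Measurable.mul
    · exact Measurable.ite
        (measurableSet_lt measurable_snd (measurable_fst.const_mul c))
        ((measurable_const.add measurable_snd).inv) measurable_const
    · exact ((measurable_fst.pow_const m).mul
        ((measurable_fst.neg).exp))
  have hInt : Integrable (Function.uncurry f)
      ((volume.restrict (Set.Ioi 0)).prod (volume.restrict (Set.Ioi 0))) := by
    rw [integrable_prod_iff hmeas]
    constructor
    · filter_upwards [self_mem_ae_restrict measurableSet_Ioi] with z hz
      show Integrable (fun t => (if t < c*z then (1+t)⁻¹ else 0) * (z^m * Real.exp (-z)))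
        (volume.restrict (Set.Ioi 0))
      exact indicator_integrable.mul_const _
    · have hbound : ∀ z ∈ Set.Ioi (0:ℝ),
          (∫ t in Set.Ioi (0:ℝ), ‖f z t‖) = Real.log (1 + c*z) * (z^m * Real.exp (-z)) := by
        intro z hz
        have hz0 : (0:ℝ) < z := hz
        have h1 : ∀ t ∈ Set.Ioi (0:ℝ), ‖f z t‖ = f z t := by
          intro t ht
          have ht0 : (0:ℝ) < t := ht
          rw [f_def, Real.norm_eq_abs, abs_of_nonneg]
          apply mul_nonneg _ (by positivity)
          split
          · positivity
          · exact le_rfl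
        rw [setIntegral_congr_fun measurableSet_Ioi h1]
        simp only [f_def]
        rw [MeasureTheory.integral_mul_const, ← log_eq_integral (by positivity)]
      apply MeasureTheory.Integrable.mono'
        (g := fun z => c * (z^(m+1) * Real.exp (-(1:ℝ)*z)))
        ((integrableOn_pow_exp (n := m+1) (a := 1) one_pos).const_mul c)
      · exact hmeas.norm.integral_prod_right'
      · filter_upwards [self_mem_ae_restrict measurableSet_Ioi] with z hz
        rw [Real.norm_eq_abs, abs_of_nonneg (by positivity)]
        have hz0 : (0:ℝ) < z := hz
        show (∫ t in Set.Ioi (0:ℝ), ‖f z t‖) ≤ c * (z^(m+1) * Real.exp (-(1:ℝ)*z))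
        rw [hbound z hz]
        have hlog : Real.log (1 + c*z) ≤ c*z := by
          have := Real.log_le_sub_one_of_pos (x := 1 + c*z) (by positivity)
          linarith
        have : Real.log (1+c*z) * (z^m * Real.exp (-z)) ≤ (c*z) * (z^m * Real.exp (-z)) := by
          apply mul_le_mul_of_nonneg_right hlog (by positivity)
        calc Real.log (1+c*z) * (z^m * Real.exp (-z)) ≤ (c*z) * (z^m * Real.exp (-z)) := this
          _ = c * (z^(m+1) * Real.exp (-(1:ℝ)*z)) := by rw [neg_one_mul]; ring
  have step1 : (∫ z in Set.Ioi (0:ℝ), Real.log (1 + c*z) * (z^m * Real.exp (-z)))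
      = ∫ z in Set.Ioi (0:ℝ), ∫ t in Set.Ioi (0:ℝ), f z t := by
    apply setIntegral_congr_fun measurableSet_Ioi
    intro z hz
    have hz0 : (0:ℝ) < z := hz
    simp only [f_def]
    rw [log_eq_integral (X := c*z) (by positivity), MeasureTheory.integral_mul_const]
  have step2 : (∫ z in Set.Ioi (0:ℝ), ∫ t in Set.Ioi (0:ℝ), f z t)
      = ∫ t in Set.Ioi (0:ℝ), ∫ z in Set.Ioi (0:ℝ), f z t :=
    MeasureTheory.integral_integral_swap hInt
  rw [step1, step2]
  apply setIntegral_congr_fun measurableSet_Ioi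
  intro t ht
  have ht0 : (0:ℝ) < t := ht
  have htc : 0 ≤ t/c := by positivity
  have h3 : ∀ z, f z t = (Set.Ioi (t/c)).indicator (fun z => (1+t)⁻¹ * (z^m * Real.exp (-z))) z := by
    intro z
    rw [f_def, Set.indicator_apply]
    simp only [Set.mem_Ioi]
    by_cases h : t < c*z
    · rw [if_pos h, if_pos (by rwa [div_lt_iff₀ hc, mul_comm])]
    · rw [if_neg h, if_neg (by rw [div_lt_iff₀ hc, mul_comm]; exact h), zero_mul]
  simp only [h3]
  rw [MeasureTheory.setIntegral_indicator measurableSet_Ioi, Set.Ioi_inter_Ioi,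
    sup_eq_right.mpr htc, MeasureTheory.integral_const_mul, gamma_tail htc]

noncomputable def F2 (a b : ℝ) (i k : ℕ) (y t : ℝ) : ℝ :=
  (1+t)⁻¹ * Real.exp (-(t/a)) * (t/a)^i * (y^k * Real.exp (-((1+t*b/a)*y)))

lemma F2_meas {a b : ℝ} {i k : ℕ} :
    Measurable (Function.uncurry (F2 a b i k)) := by
  have : Function.uncurry (F2 a b i k) = fun p : ℝ × ℝ =>
      (1+p.2)⁻¹ * Real.exp (-(p.2/a)) * (p.2/a)^i *
        (p.1^k * Real.exp (-((1+p.2*b/a)*p.1))) := rfl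
  rw [this]; fun_prop

lemma F2_nonneg {a b : ℝ} (ha : 0 ≤ a) {i k : ℕ} {y t : ℝ} (hy : 0 ≤ y) (ht : 0 ≤ t) :
    0 ≤ F2 a b i k y t := by
  unfold F2
  have h1 : (0:ℝ) ≤ (1+t)⁻¹ := by
    apply inv_nonneg.2; linarith
  have h2 : (0:ℝ) ≤ (t/a)^i := by positivity
  have h3 : (0:ℝ) ≤ y^k := by positivity
  positivity

lemma F2_le {a b : ℝ} (ha : 0 < a) (hb : 0 ≤ b) {i k : ℕ} {y t : ℝ}
    (hy : 0 ≤ y) (ht : 0 ≤ t) :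
    F2 a b i k y t ≤ (t/a)^i * Real.exp (-(1/a)*t) * (y^k * Real.exp (-y)) := by
  unfold F2
  have h1 : (1+t)⁻¹ ≤ 1 := by
    rw [inv_le_one_iff₀]; right; linarith
  have h2 : Real.exp (-((1+t*b/a)*y)) ≤ Real.exp (-y) := by
    apply Real.exp_le_exp.2
    have : 0 ≤ t*b/a * y := by positivity
    nlinarith
  have h3 : Real.exp (-(t/a)) = Real.exp (-(1/a)*t) := by ring_nf
  rw [h3]
  have e1 : (0:ℝ) ≤ Real.exp (-(1/a)*t) := (Real.exp_pos _).le
  have e2 : (0:ℝ) ≤ (t/a)^i := by positivity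
  have e3 : (0:ℝ) ≤ y^k := by positivity
  have e4 : (0:ℝ) ≤ (1+t)⁻¹ := by positivity
  calc (1+t)⁻¹ * Real.exp (-(1/a)*t) * (t/a)^i * (y^k * Real.exp (-((1+t*b/a)*y)))
      ≤ 1 * Real.exp (-(1/a)*t) * (t/a)^i * (y^k * Real.exp (-y)) := by
        apply mul_le_mul
        · apply mul_le_mul_of_nonneg_right (mul_le_mul_of_nonneg_right h1 e1) e2
        · exact mul_le_mul_of_nonneg_left h2 e3
        · positivity
        · positivity
    _ = (t/a)^i * Real.exp (-(1/a)*t) * (y^k * Real.exp (-y)) := by ring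

lemma F2_int_t {a b : ℝ} (ha : 0 < a) (hb : 0 ≤ b) {i k : ℕ} {y : ℝ} (hy : 0 ≤ y) :
    IntegrableOn (fun t => F2 a b i k y t) (Set.Ioi 0) := by
  apply MeasureTheory.Integrable.mono'
    (g := fun t => (a⁻¹^i * y^k) * (t^i * Real.exp (-(1/a)*t)))
    (((integrableOn_pow_exp (n := i) (a := 1/a) (by positivity))).const_mul _)
  · exact (F2_meas.comp (measurable_const.prodMk measurable_id)).aestronglyMeasurable
  · filter_upwards [self_mem_ae_restrict measurableSet_Ioi] with t ht
    have ht0 : (0:ℝ) < t := ht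
    rw [Real.norm_eq_abs, abs_of_nonneg (F2_nonneg ha.le hy ht0.le)]
    calc F2 a b i k y t ≤ (t/a)^i * Real.exp (-(1/a)*t) * (y^k * Real.exp (-y)) :=
          F2_le ha hb hy ht0.le
      _ ≤ (t/a)^i * Real.exp (-(1/a)*t) * (y^k * 1) := by
          gcongr
          · exact (Real.exp_le_one_iff).2 (by linarith)
      _ = (a⁻¹^i * y^k) * (t^i * Real.exp (-(1/a)*t)) := by
          rw [div_pow, inv_pow]
          field_simp

lemma F2_t_norm_integral_bound {a b : ℝ} (ha : 0 < a) (hb : 0 ≤ b) {i k : ℕ} {y : ℝ}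
    (hy : 0 ≤ y) :
    (∫ t in Set.Ioi (0:ℝ), ‖F2 a b i k y t‖)
      ≤ (i.factorial * a) * (y^k * Real.exp (-(1:ℝ)*y)) := by
  have hbd : IntegrableOn (fun t => (a⁻¹^i * (y^k * Real.exp (-y))) *
      (t^i * Real.exp (-(1/a)*t))) (Set.Ioi 0) :=
    (integrableOn_pow_exp (n := i) (a := 1/a) (by positivity)).const_mul _
  have h1 : (∫ t in Set.Ioi (0:ℝ), ‖F2 a b i k y t‖)
      ≤ ∫ t in Set.Ioi (0:ℝ), (a⁻¹^i * (y^k * Real.exp (-y))) *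
          (t^i * Real.exp (-(1/a)*t)) := by
    apply setIntegral_mono_on ((F2_int_t ha hb hy).norm) hbd measurableSet_Ioi
    intro t ht
    have ht0 : (0:ℝ) < t := ht
    rw [Real.norm_eq_abs, abs_of_nonneg (F2_nonneg ha.le hy ht0.le)]
    calc F2 a b i k y t ≤ (t/a)^i * Real.exp (-(1/a)*t) * (y^k * Real.exp (-y)) :=
          F2_le ha hb hy ht0.le
      _ = (a⁻¹^i * (y^k * Real.exp (-y))) * (t^i * Real.exp (-(1/a)*t)) := by
          rw [div_pow, inv_pow]; field_simp
  calc (∫ t in Set.Ioi (0:ℝ), ‖F2 a b i k y t‖) ≤ _ := h1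
    _ = (i.factorial * a) * (y^k * Real.exp (-(1:ℝ)*y)) := by
        rw [MeasureTheory.integral_const_mul, integral_pow_exp (by positivity : (0:ℝ) < 1/a)]
        rw [neg_one_mul, show ((1:ℝ)/a)^(i+1) = (a^(i+1))⁻¹ by rw [one_div, inv_pow],
          div_inv_eq_mul]
        field_simp
        rw [one_div, inv_pow, pow_succ, mul_comm ((a^i)⁻¹), mul_assoc, ← mul_assoc (a^i)⁻¹,
          inv_mul_cancel₀ (by positivity), one_mul, mul_comm]

lemma F2_prod_int {a b : ℝ} (ha : 0 < a) (hb : 0 ≤ b) {i k : ℕ} :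
    Integrable (Function.uncurry (F2 a b i k))
      ((volume.restrict (Set.Ioi 0)).prod (volume.restrict (Set.Ioi 0))) := by
  rw [integrable_prod_iff F2_meas.aestronglyMeasurable]
  constructor
  · filter_upwards [self_mem_ae_restrict measurableSet_Ioi] with y hy
    exact F2_int_t ha hb (le_of_lt hy)
  · apply MeasureTheory.Integrable.mono'
      (g := fun y => (i.factorial * a) * (y^k * Real.exp (-(1:ℝ)*y)))
      ((integrableOn_pow_exp (n := k) (a := 1) one_pos).const_mul _)
    · exact F2_meas.norm.aestronglyMeasurable.integral_prod_right'
    · filter_upwards [self_mem_ae_restrict measurableSet_Ioi] with y hy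
      rw [Real.norm_eq_abs, abs_of_nonneg (by positivity)]
      exact F2_t_norm_integral_bound ha hb (le_of_lt hy)

lemma F2_int_y {a b : ℝ} (ha : 0 < a) (hb : 0 ≤ b) {i k : ℕ} :
    IntegrableOn (fun y => ∫ t in Set.Ioi (0:ℝ), F2 a b i k y t) (Set.Ioi 0) := by
  apply MeasureTheory.Integrable.mono'
    (g := fun y => (i.factorial * a) * (y^k * Real.exp (-(1:ℝ)*y)))
    ((integrableOn_pow_exp (n := k) (a := 1) one_pos).const_mul _)
  · exact F2_meas.aestronglyMeasurable.integral_prod_right'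
  · filter_upwards [self_mem_ae_restrict measurableSet_Ioi] with y hy
    calc ‖∫ t in Set.Ioi (0:ℝ), F2 a b i k y t‖
        ≤ ∫ t in Set.Ioi (0:ℝ), ‖F2 a b i k y t‖ := norm_integral_le_integral_norm _
      _ ≤ _ := F2_t_norm_integral_bound ha hb (le_of_lt hy)

lemma F2_inner_y {a b : ℝ} (ha : 0 < a) (hb : 0 ≤ b) {i k : ℕ} {t : ℝ} (ht : 0 < t) :
    ∫ y in Set.Ioi (0:ℝ), F2 a b i k y t
      = (1+t)⁻¹ * Real.exp (-(t/a)) * (t/a)^i *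
          ((k.factorial : ℝ)/(1+t*b/a)^(k+1)) := by
  have hd : (0:ℝ) < 1+t*b/a := by positivity
  unfold F2
  rw [MeasureTheory.integral_const_mul]
  simp only [← neg_mul]
  rw [integral_pow_exp hd]

/-- `I₁(a, b, m, n) = ∫₀^∞ x^m e^(−a x) / ((x+b)^n (x+1)) dx`. -/
noncomputable def I₁ (a b : ℝ) (m n : ℕ) : ℝ :=
  ∫ x in Set.Ioi (0 : ℝ), x ^ m * Real.exp (-a * x) / ((x + b) ^ n * (x + 1))

lemma F2_t_integral {a b : ℝ} (ha : 0 < a) (hb : 0 < b) (i k : ℕ) :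
    ∫ t in Set.Ioi (0:ℝ), (1+t)⁻¹ * Real.exp (-(t/a)) * (t/a)^i *
        ((k.factorial : ℝ)/(1+t*b/a)^(k+1))
      = ((a^i)⁻¹ * k.factorial * (a/b)^(k+1)) * I₁ (1/a) (a/b) i (k+1) := by
  rw [I₁, ← MeasureTheory.integral_const_mul]
  apply setIntegral_congr_fun measurableSet_Ioi
  intro t ht
  have ht0 : (0:ℝ) < t := ht
  have key : (1+t*b/a) = (b/a) * (t + a/b) := by field_simp; ring
  have h1t : (1+t) ≠ 0 := by positivity
  have htab : (t + a/b) ≠ 0 := by positivity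
  simp only
  rw [key, mul_pow, show -(t/a) = -(1/a)*t by ring]
  rw [div_pow, div_pow]
  field_simp
  have hbk : b * b^k * b⁻¹ * b⁻¹^k = 1 := by
    rw [mul_right_comm b, mul_inv_cancel₀ hb.ne', one_mul, ← mul_pow, mul_inv_cancel₀ hb.ne', one_pow]
  linear_combination (-(a*a^k*t) - a*a^k) * hbk

lemma expand {a b : ℝ} (ha : 0 < a) (hb : 0 < b) (m : ℕ) {y : ℝ} (hy : 0 < y) (t : ℝ) :
    Real.exp (-y) * ((1+t)⁻¹ * (Real.exp (-(t/(a/(1+b*y)))) *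
        ∑ i ∈ Finset.range (m+1), ((m.factorial : ℝ)/i.factorial) * (t/(a/(1+b*y)))^i))
      = ∑ i ∈ Finset.range (m+1), ∑ k ∈ Finset.range (i+1),
          (((m.factorial : ℝ)/i.factorial) * (i.choose k) * b^k) * F2 a b i k y t := by
  have hby : (0:ℝ) < 1 + b*y := by positivity
  have hexp : Real.exp (-y) * Real.exp (-(t*(1+b*y)/a))
      = Real.exp (-(t/a)) * Real.exp (-((1+t*b/a)*y)) := by
    rw [← Real.exp_add, ← Real.exp_add]
    congr 1
    field_simp
    ring
  rw [div_div_eq_mul_div]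
  simp only [Finset.mul_sum]
  apply Finset.sum_congr rfl
  intro i _
  have hs : (t*(1+b*y)/a)^i = (t/a)^i * ((b*y+1)^i) := by
    rw [← mul_pow]; congr 1; ring
  rw [hs, add_pow]
  simp only [one_pow, mul_one, Finset.mul_sum]
  apply Finset.sum_congr rfl
  intro k _
  unfold F2
  rw [mul_pow b y k]
  linear_combination (((m.factorial : ℝ)/i.factorial) * (i.choose k) * b^k * y^k *
    (1+t)⁻¹ * (t/a)^i) * hexp

/-- Closed form `R⁽²⁾(α, β, M)`: for `α, β > 0` and `M ≥ 1`,
`∫₀^∞ ∫₀^∞ log₂(1 + α z/(1 + β y)) (z^(M−1) e^(−z)/(M−1)!) e^(−y) dz dy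
  = log₂(e) Σ_{i=0}^{M−1} Σ_{l=0}^{i} α^(l+1−i)/(β (i−l)!) I₁(1/α, α/β, i, l+1)`. -/
theorem stmt1 (α β : ℝ) (hα : 0 < α) (hβ : 0 < β) (M : ℕ) (hM : 0 < M) :
    (∫ y in Set.Ioi (0 : ℝ), ∫ z in Set.Ioi (0 : ℝ),
        Real.logb 2 (1 + α * z / (1 + β * y)) *
          (z ^ (M - 1) * Real.exp (-z) / (Nat.factorial (M - 1))) * Real.exp (-y)) =
      Real.logb 2 (Real.exp 1) *
        ∑ i ∈ Finset.range M, ∑ l ∈ Finset.range (i + 1),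
          α ^ ((l : ℝ) + 1 - (i : ℝ)) / (β * (Nat.factorial (i - l))) *
            I₁ (1 / α) (α / β) i (l + 1) := by
  obtain ⟨m, rfl⟩ : ∃ m, M = m + 1 := ⟨M - 1, (Nat.succ_pred_eq_of_pos hM).symm⟩
  simp only [Nat.add_sub_cancel]
  set C : ℝ := Real.logb 2 (Real.exp 1) / m.factorial with hC
  set c : ℕ → ℕ → ℝ := fun i k => ((m.factorial : ℝ)/i.factorial) * (i.choose k) * β^k
    with hc
  have hfm : (0:ℝ) < m.factorial := by exact_mod_cast Nat.factorial_pos m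
  -- Step A
  have stepA : ∀ y ∈ Set.Ioi (0:ℝ),
      (∫ z in Set.Ioi (0:ℝ), Real.logb 2 (1 + α * z / (1 + β * y)) *
        (z ^ m * Real.exp (-z) / (Nat.factorial m)) * Real.exp (-y))
      = C * (Real.exp (-y) * ∫ z in Set.Ioi (0:ℝ),
          Real.log (1 + (α/(1+β*y)) * z) * (z ^ m * Real.exp (-z))) := by
    intro y hy
    have hy0 : (0:ℝ) < y := hy
    rw [← MeasureTheory.integral_const_mul, ← MeasureTheory.integral_const_mul]
    apply setIntegral_congr_fun measurableSet_Ioi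
    intro z hz
    have hby : (0:ℝ) < 1 + β*y := by positivity
    have harg : α * z / (1 + β * y) = (α/(1+β*y)) * z := by ring
    show Real.logb 2 (1 + α * z / (1 + β * y)) *
        (z ^ m * Real.exp (-z) / (Nat.factorial m)) * Real.exp (-y)
      = C * (Real.exp (-y) * (Real.log (1 + (α/(1+β*y)) * z) * (z ^ m * Real.exp (-z))))
    rw [harg, hC]
    simp only [Real.logb, Real.log_exp]
    field_simp
  -- Step B
  have stepB : ∀ y ∈ Set.Ioi (0:ℝ),
      Real.exp (-y) * (∫ z in Set.Ioi (0:ℝ),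
          Real.log (1 + (α/(1+β*y)) * z) * (z ^ m * Real.exp (-z)))
      = ∑ i ∈ Finset.range (m+1), ∑ k ∈ Finset.range (i+1),
          c i k * ∫ t in Set.Ioi (0:ℝ), F2 α β i k y t := by
    intro y hy
    have hy0 : (0:ℝ) < y := hy
    have hby : (0:ℝ) < 1 + β*y := by positivity
    have hcy : (0:ℝ) < α/(1+β*y) := by positivity
    rw [S1 hcy, ← MeasureTheory.integral_const_mul]
    have congr1 : ∀ t ∈ Set.Ioi (0:ℝ),
        Real.exp (-y) * ((1+t)⁻¹ * (Real.exp (-(t/(α/(1+β*y)))) *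
          ∑ i ∈ Finset.range (m+1), ((m.factorial : ℝ)/i.factorial) * (t/(α/(1+β*y)))^i))
        = ∑ i ∈ Finset.range (m+1), ∑ k ∈ Finset.range (i+1),
            c i k * F2 α β i k y t := fun t _ => expand hα hβ m hy0 t
    rw [setIntegral_congr_fun measurableSet_Ioi congr1]
    rw [MeasureTheory.integral_finset_sum _ (fun i _ => integrable_finset_sum _
      (fun k _ => ((F2_int_t hα hβ.le hy0.le).const_mul (c i k))))]
    apply Finset.sum_congr rfl
    intro i _
    rw [MeasureTheory.integral_finset_sum _
      (fun k _ => ((F2_int_t hα hβ.le hy0.le).const_mul (c i k)))]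
    apply Finset.sum_congr rfl
    intro k _
    rw [MeasureTheory.integral_const_mul]
  calc (∫ y in Set.Ioi (0 : ℝ), ∫ z in Set.Ioi (0 : ℝ),
        Real.logb 2 (1 + α * z / (1 + β * y)) *
          (z ^ m * Real.exp (-z) / (Nat.factorial m)) * Real.exp (-y))
      = ∫ y in Set.Ioi (0:ℝ), C * (∑ i ∈ Finset.range (m+1), ∑ k ∈ Finset.range (i+1),
          c i k * ∫ t in Set.Ioi (0:ℝ), F2 α β i k y t) := by
        apply setIntegral_congr_fun measurableSet_Ioi
        intro y hy
        show (∫ z in Set.Ioi (0 : ℝ),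
            Real.logb 2 (1 + α * z / (1 + β * y)) *
              (z ^ m * Real.exp (-z) / (Nat.factorial m)) * Real.exp (-y))
          = C * (∑ i ∈ Finset.range (m+1), ∑ k ∈ Finset.range (i+1),
              c i k * ∫ t in Set.Ioi (0:ℝ), F2 α β i k y t)
        rw [stepA y hy, stepB y hy]
    _ = C * ∑ i ∈ Finset.range (m+1), ∑ k ∈ Finset.range (i+1),
          c i k * ∫ y in Set.Ioi (0:ℝ), ∫ t in Set.Ioi (0:ℝ), F2 α β i k y t := by
        rw [MeasureTheory.integral_const_mul]
        congr 1
        rw [MeasureTheory.integral_finset_sum _ (fun i _ => integrable_finset_sum _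
          (fun k _ => ((F2_int_y hα hβ.le).const_mul (c i k))))]
        apply Finset.sum_congr rfl
        intro i _
        rw [MeasureTheory.integral_finset_sum _
          (fun k _ => ((F2_int_y hα hβ.le).const_mul (c i k)))]
        apply Finset.sum_congr rfl
        intro k _
        rw [MeasureTheory.integral_const_mul]
    _ = C * ∑ i ∈ Finset.range (m+1), ∑ k ∈ Finset.range (i+1),
          c i k * (((α^i)⁻¹ * k.factorial * (α/β)^(k+1)) * I₁ (1/α) (α/β) i (k+1)) := by
        congr 1
        apply Finset.sum_congr rfl; intro i _
        apply Finset.sum_congr rfl; intro k _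
        congr 1
        rw [MeasureTheory.integral_integral_swap (F2_prod_int hα hβ.le)]
        rw [setIntegral_congr_fun measurableSet_Ioi
          (fun t ht => F2_inner_y hα hβ.le (Set.mem_Ioi.1 ht))]
        exact F2_t_integral hα hβ i k
    _ = Real.logb 2 (Real.exp 1) *
        ∑ i ∈ Finset.range (m+1), ∑ l ∈ Finset.range (i + 1),
          α ^ ((l : ℝ) + 1 - (i : ℝ)) / (β * (Nat.factorial (i - l))) *
            I₁ (1 / α) (α / β) i (l + 1) := by
        rw [Finset.mul_sum, Finset.mul_sum]
        apply Finset.sum_congr rfl; intro i _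
        rw [Finset.mul_sum, Finset.mul_sum]
        apply Finset.sum_congr rfl; intro k hk
        have hki : k ≤ i := Nat.lt_succ_iff.1 (Finset.mem_range.1 hk)
        have hfact : (i.choose k : ℝ) * k.factorial * (i-k).factorial = i.factorial := by
          exact_mod_cast Nat.choose_mul_factorial_mul_factorial hki
        have hrpow : α ^ ((k:ℝ) + 1 - (i:ℝ)) = α^(k+1) / α^i := by
          rw [show ((k:ℝ)+1-(i:ℝ)) = (((k+1:ℕ):ℝ) - ((i:ℕ):ℝ)) by push_cast; ring,
            Real.rpow_sub hα, Real.rpow_natCast, Real.rpow_natCast]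
        rw [hC, hc, hrpow]
        have hif : ((i.factorial :ℝ)) ≠ 0 := by positivity
        have hikf : (((i-k).factorial :ℝ)) ≠ 0 := by positivity
        have hkf : ((k.factorial :ℝ)) ≠ 0 := by positivity
        set J := I₁ (1/α) (α/β) i (k+1) with hJ
        simp only [div_pow]
        field_simp
        linear_combination (Real.logb 2 (Real.exp 1) * β * β^k * J) * hfact
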